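/- arXiv:2512.00452 — 2 statements merged into one kernel-verified Lean document; each statement's English description precedes it below -/
import Mathlib

section
/- Let (a_n)_{n≥0} be a strictly increasing sequence of non-negative integers such that a_{n+1} − a_n → ∞ as n → ∞. Let γ₁ = Σ_{i=0}^∞ 2^{a_{2i}} ∈ ℤ₂ and γ₂ = Σ_{i=0}^∞ 2^{a_{2i+1}} ∈ ℤ₂. Then: (1) C(γ₁,m)·C(γ₂,m) → 0 in ℤ₂ as m → ∞ (i.e. v₂(C(γ₁,m)·C(γ₂,m)) → ∞); and (2) for every j ≥ 0, taking m = 2^{a_j}, one has v₂(C(γ₁,2^{a_j})·C(γ₂,2^{a_j})) = a_{j+1} − a_j. -/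
open Finset

/-! ### Natural-number toolkit -/

lemma sum_pow_lt {M : ℕ} (s : Finset ℕ) (e : ℕ → ℕ) (he : Set.InjOn e s)
    (hM : ∀ i ∈ s, e i < M) : ∑ i ∈ s, 2 ^ (e i) < 2 ^ M := by
  calc ∑ i ∈ s, 2 ^ (e i) = ∑ x ∈ s.image e, 2 ^ x := (Finset.sum_image (fun a ha b hb => he ha hb)).symm
    _ ≤ ∑ x ∈ Finset.range M, 2 ^ x := by
        apply Finset.sum_le_sum_of_subset
        intro x hx
        simp only [Finset.mem_image] at hx
        obtain ⟨i, hi, rfl⟩ := hx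
        exact Finset.mem_range.2 (hM i hi)
    _ = 2 ^ M - 1 := by
        have := Nat.geomSum_eq (le_refl 2) M
        simp [this]
    _ < 2 ^ M := by have : 0 < 2^M := Nat.pow_pos (by norm_num); omega

lemma mod_sum_pow (c : ℕ → ℕ) (hc : Function.Injective c) (L M : ℕ) :
    (∑ i ∈ range L, 2 ^ (c i)) % 2 ^ M = ∑ i ∈ (range L).filter (fun i => c i < M), 2 ^ (c i) := by
  classical
  rw [← Finset.sum_filter_add_sum_filter_not (range L) (fun i => c i < M)]
  obtain ⟨q, hq⟩ : (2:ℕ) ^ M ∣ ∑ i ∈ (range L).filter (fun i => ¬ c i < M), 2 ^ (c i) :=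
    Finset.dvd_sum (fun i hi => pow_dvd_pow 2 (by simp only [Finset.mem_filter] at hi; omega))
  rw [hq, Nat.add_mul_mod_self_left, Nat.mod_eq_of_lt]
  exact sum_pow_lt _ _ (hc.injOn) (by simp +contextual)

lemma borrow_iff {n m : ℕ} (h : m ≤ n) (i : ℕ) :
    2 ^ i ≤ m % 2 ^ i + (n - m) % 2 ^ i ↔ n % 2 ^ i < m % 2 ^ i := by
  set q := 2 ^ i with hqdef
  have hq : 0 < q := show 0 < 2 ^ i from Nat.pow_pos (by norm_num)
  have h1 : (m % q + (n - m) % q) % q = n % q := by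
    rw [← Nat.add_mod, Nat.add_sub_cancel' h]
  have h2 : m % q < q := Nat.mod_lt _ hq
  have h3 : (n-m) % q < q := Nat.mod_lt _ hq
  constructor
  · intro hle
    have h4 : (m % q + (n - m) % q) % q = m % q + (n - m) % q - q := by
      rw [Nat.mod_eq_sub_mod hle]
      exact Nat.mod_eq_of_lt (by omega)
    omega
  · intro hlt
    by_contra hle
    push_neg at hle
    rw [Nat.mod_eq_of_lt hle] at h1
    omega

lemma kummer_borrow {n m b : ℕ} (h : m ≤ n) (hb : Nat.log 2 n < b) :
    padicValNat 2 (n.choose m) =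
      ((Finset.Ico 1 b).filter fun i => n % 2 ^ i < m % 2 ^ i).card := by
  haveI : Fact (Nat.Prime 2) := ⟨Nat.prime_two⟩
  rw [padicValNat_choose h hb]
  congr 1
  apply Finset.filter_congr
  intro i _
  exact borrow_iff h i

lemma le_mod_sum_pow (c : ℕ → ℕ) (hc : Function.Injective c) {L M k : ℕ}
    (hkL : k < L) (hk : c k < M) :
    2 ^ (c k) ≤ (∑ i ∈ range L, 2 ^ (c i)) % 2 ^ M := by
  rw [mod_sum_pow c hc]
  exact Finset.single_le_sum (f := fun i => 2 ^ (c i)) (fun i _ => Nat.zero_le _)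
    (Finset.mem_filter.2 ⟨Finset.mem_range.2 hkL, hk⟩)

lemma le_sum_pow (c : ℕ → ℕ) {L k : ℕ} (hkL : k < L) :
    2 ^ (c k) ≤ ∑ i ∈ range L, 2 ^ (c i) :=
  Finset.single_le_sum (f := fun i => 2 ^ (c i)) (fun i _ => Nat.zero_le _) (Finset.mem_range.2 hkL)

lemma pow_mod_pow_of_le {i A : ℕ} (hiA : i ≤ A) : (2:ℕ) ^ A % 2 ^ i = 0 :=
  Nat.eq_zero_of_dvd_of_lt
    ((Nat.dvd_mod_iff (dvd_refl _)).2 (pow_dvd_pow 2 hiA))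
    (Nat.mod_lt _ (Nat.pow_pos (by norm_num)))

lemma val_choose_pow_eq_zero (c : ℕ → ℕ) (hc : Function.Injective c) {L k A : ℕ}
    (hkL : k < L) (hk : c k = A) :
    padicValNat 2 ((∑ i ∈ range L, 2 ^ (c i)).choose (2 ^ A)) = 0 := by
  set n := ∑ i ∈ range L, 2 ^ (c i) with hn
  have hm : 2 ^ A ≤ n := hk ▸ le_sum_pow c hkL
  rw [kummer_borrow hm (Nat.lt_succ_self _)]
  convert Finset.card_empty
  rw [Finset.filter_eq_empty_iff]
  intro i _
  simp only [not_lt]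
  rcases le_or_gt i A with hiA | hiA
  · rw [pow_mod_pow_of_le hiA]
    exact Nat.zero_le _
  · have h1 : (2:ℕ) ^ A % 2 ^ i = 2 ^ A := Nat.mod_eq_of_lt (Nat.pow_lt_pow_right (by norm_num) hiA)
    rw [h1]
    exact hk ▸ le_mod_sum_pow c hc hkL (hk ▸ hiA)

lemma val_choose_pow_eq_gap (c : ℕ → ℕ) (hc : Function.Injective c) {L k A A' : ℕ}
    (hAA' : A < A') (hsplit : ∀ i < L, c i < A ∨ A' ≤ c i)
    (hkL : k < L) (hk : c k = A') :
    padicValNat 2 ((∑ i ∈ range L, 2 ^ (c i)).choose (2 ^ A)) = A' - A := by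
  classical
  set n := ∑ i ∈ Finset.range L, 2 ^ (c i) with hn
  have hA'n : 2 ^ A' ≤ n := hk ▸ le_sum_pow c hkL
  have hm : 2 ^ A ≤ n := le_trans (Nat.pow_le_pow_right (by norm_num) hAA'.le) hA'n
  have hb : Nat.log 2 n < max (Nat.log 2 n + 1) (A' + 1) := lt_of_lt_of_le (Nat.lt_succ_self _) (le_max_left _ _)
  rw [kummer_borrow hm hb]
  have hfilter : ((Finset.Ico 1 (max (Nat.log 2 n + 1) (A' + 1))).filter
      fun i => n % 2 ^ i < 2 ^ A % 2 ^ i) = Finset.Ico (A + 1) (A' + 1) := by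
    ext i
    simp only [Finset.mem_filter, Finset.mem_Ico]
    constructor
    · rintro ⟨⟨h1, h2⟩, hbor⟩
      refine ⟨?_, ?_⟩
      · by_contra hle
        push_neg at hle
        rw [pow_mod_pow_of_le (by omega)] at hbor
        omega
      · by_contra hle
        push_neg at hle
        have h4 : (2:ℕ) ^ A % 2 ^ i = 2 ^ A :=
          Nat.mod_eq_of_lt (Nat.pow_lt_pow_right (by norm_num) (by omega))
        have h5 : 2 ^ A' ≤ n % 2 ^ i := hk ▸ le_mod_sum_pow c hc hkL (by omega)
        have h6 : (2:ℕ) ^ A < 2 ^ A' := Nat.pow_lt_pow_right (by norm_num) hAA'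
        omega
    · rintro ⟨h1, h2⟩
      have hiA : A < i := by omega
      refine ⟨⟨by omega, by omega⟩, ?_⟩
      have h4 : (2:ℕ) ^ A % 2 ^ i = 2 ^ A :=
        Nat.mod_eq_of_lt (Nat.pow_lt_pow_right (by norm_num) hiA)
      rw [h4, mod_sum_pow c hc]
      apply sum_pow_lt _ _ (hc.injOn.mono (by intro x hx; exact trivial))
      intro x hx
      simp only [Finset.mem_filter, Finset.mem_range] at hx
      rcases hsplit x hx.1 with h | h
      · exact h
      · omega
  rw [hfilter, Nat.card_Ico]
  omega

lemma val_choose_lower (c : ℕ → ℕ) (hc : Function.Injective c) {L t u m : ℕ}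
    (htu : t < u) (hsplit : ∀ i < L, c i ≤ t ∨ u ≤ c i) (hm2 : m < 2 ^ (t + 1))
    (hml : ∑ i ∈ (range L).filter (fun i => c i ≤ t), 2 ^ (c i) < m)
    (hmn : m ≤ ∑ i ∈ range L, 2 ^ (c i)) :
    u - t ≤ padicValNat 2 ((∑ i ∈ range L, 2 ^ (c i)).choose m) := by
  classical
  set n := ∑ i ∈ Finset.range L, 2 ^ (c i) with hn
  have hb : Nat.log 2 n < max (Nat.log 2 n + 1) (u + 1) := lt_of_lt_of_le (Nat.lt_succ_self _) (le_max_left _ _)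
  rw [kummer_borrow hmn hb]
  calc u - t = (Finset.Ico (t + 1) (u + 1)).card := by rw [Nat.card_Ico]; omega
    _ ≤ _ := by
      apply Finset.card_le_card
      intro i hi
      simp only [Finset.mem_Ico] at hi
      simp only [Finset.mem_filter, Finset.mem_Ico]
      refine ⟨⟨by omega, by omega⟩, ?_⟩
      have h4 : m % 2 ^ i = m :=
        Nat.mod_eq_of_lt (lt_of_lt_of_le hm2 (Nat.pow_le_pow_right (by norm_num) (by omega)))
      rw [h4, mod_sum_pow c hc]
      have hfeq : (Finset.range L).filter (fun j => c j < i) = (Finset.range L).filter (fun j => c j ≤ t) := by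
        apply Finset.filter_congr
        intro x hx
        simp only [Finset.mem_range] at hx
        rcases hsplit x hx with h | h <;> (constructor <;> intro <;> omega)
      rw [hfeq]
      exact hml

/-! ### p-adic toolkit -/

/-- The generalized binomial coefficient `C(γ, m) = γ(γ-1)⋯(γ-m+1)/m!` for `γ ∈ ℚ_p`. -/
noncomputable def pChoose (p : ℕ) [Fact p.Prime] (γ : ℚ_[p]) (m : ℕ) : ℚ_[p] :=
  (descPochhammer ℚ_[p] m).eval γ / (m.factorial : ℚ_[p])

lemma pChoose_natCast (n m : ℕ) : pChoose 2 (n : ℚ_[2]) m = (n.choose m : ℚ_[2]) := by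
  rw [pChoose, descPochhammer_eval_eq_descFactorial, Nat.descFactorial_eq_factorial_mul_choose]
  push_cast
  rw [mul_comm, mul_div_assoc, div_self (by exact_mod_cast m.factorial_ne_zero), mul_one]

lemma eval_coe (m : ℕ) (x : ℤ_[2]) :
    (((descPochhammer ℤ_[2] m).eval x : ℤ_[2]) : ℚ_[2]) =
      (descPochhammer ℚ_[2] m).eval (x : ℚ_[2]) := by
  have h : descPochhammer ℚ_[2] m = (descPochhammer ℤ_[2] m).map (PadicInt.Coe.ringHom) :=
    (descPochhammer_map _ m).symm
  rw [h, Polynomial.eval_map, show ((x : ℚ_[2])) = PadicInt.Coe.ringHom x from rfl,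
    Polynomial.eval₂_at_apply]
  rfl

lemma pChoose_sub_norm (γ : ℤ_[2]) (n m : ℕ) :
    ‖pChoose 2 (γ : ℚ_[2]) m - (n.choose m : ℚ_[2])‖ ≤
      ‖(γ : ℚ_[2]) - (n : ℚ_[2])‖ / ‖(m.factorial : ℚ_[2])‖ := by
  have hfact : ((m.factorial : ℚ_[2])) ≠ 0 := by exact_mod_cast m.factorial_ne_zero
  have hpos : (0:ℝ) < ‖(m.factorial : ℚ_[2])‖ := norm_pos_iff.2 hfact
  rw [← pChoose_natCast]
  have hcast : ((n : ℤ_[2]) : ℚ_[2]) = (n : ℚ_[2]) := by push_cast; rfl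
  rw [pChoose, pChoose, div_sub_div_same, ← hcast, ← eval_coe, ← eval_coe, ← PadicInt.coe_sub]
  obtain ⟨d, hd⟩ := Polynomial.sub_dvd_eval_sub γ (n : ℤ_[2]) (descPochhammer ℤ_[2] m)
  rw [norm_div, hd]
  have key : ‖(((γ - (n:ℤ_[2])) * d : ℤ_[2]) : ℚ_[2])‖ ≤ ‖(γ:ℚ_[2]) - (n:ℚ_[2])‖ := by
    have h2 : ‖γ - (n:ℤ_[2])‖ = ‖(γ:ℚ_[2]) - (n:ℚ_[2])‖ := by
      rw [← hcast, ← PadicInt.coe_sub, PadicInt.padic_norm_e_of_padicInt]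
    rw [PadicInt.padic_norm_e_of_padicInt, norm_mul, h2]
    calc ‖(γ:ℚ_[2]) - (n:ℚ_[2])‖ * ‖d‖ ≤ ‖(γ:ℚ_[2]) - (n:ℚ_[2])‖ * 1 :=
          mul_le_mul_of_nonneg_left d.norm_le_one (norm_nonneg _)
      _ = _ := mul_one _
  exact div_le_div_of_nonneg_right key hpos.le

lemma norm_natCast_q (k : ℕ) (h : k ≠ 0) :
    ‖(k : ℚ_[2])‖ = (2:ℝ) ^ (-(padicValNat 2 k : ℤ)) := by
  rw [Padic.norm_eq_zpow_neg_valuation (by exact_mod_cast h), Padic.valuation_natCast]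
  norm_num

lemma val_eq_of_norm (x : ℚ_[2]) (v : ℤ) (h : ‖x‖ = (2:ℝ) ^ (-v)) :
    x ≠ 0 ∧ x.valuation = v := by
  have hx : x ≠ 0 := by
    intro h0
    rw [h0, norm_zero] at h
    have : (0:ℝ) < (2:ℝ) ^ (-v) := zpow_pos (by norm_num) _
    linarith
  refine ⟨hx, ?_⟩
  rw [Padic.norm_eq_zpow_neg_valuation hx] at h
  have h2 : (2:ℝ) ^ (-x.valuation) = (2:ℝ) ^ (-v) := by
    rw [← h]; norm_num
  have := zpow_right_injective₀ (a := (2:ℝ)) (by norm_num) (by norm_num) h2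
  omega

lemma pChoose_norm_eq (γ : ℤ_[2]) (n m N : ℕ) (hmn : m ≤ n)
    (hN : padicValNat 2 (n.choose m) + padicValNat 2 m.factorial < N)
    (hclose : ‖(γ : ℚ_[2]) - (n : ℚ_[2])‖ ≤ (2:ℝ) ^ (-(N:ℤ))) :
    ‖pChoose 2 (γ : ℚ_[2]) m‖ = (2:ℝ) ^ (-(padicValNat 2 (n.choose m) : ℤ)) := by
  set v := padicValNat 2 (n.choose m) with hv
  set vf := padicValNat 2 m.factorial with hvf
  have hchoose : (n.choose m) ≠ 0 := Nat.choose_pos hmn |>.ne'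
  have hnormc : ‖(n.choose m : ℚ_[2])‖ = (2:ℝ) ^ (-(v:ℤ)) := norm_natCast_q _ hchoose
  have hnormf : ‖(m.factorial : ℚ_[2])‖ = (2:ℝ) ^ (-(vf:ℤ)) := norm_natCast_q _ m.factorial_ne_zero
  have hdiff : ‖pChoose 2 (γ : ℚ_[2]) m - (n.choose m : ℚ_[2])‖ ≤ (2:ℝ) ^ ((vf:ℤ) - N) := by
    refine (pChoose_sub_norm γ n m).trans ?_
    rw [hnormf]
    rw [div_eq_mul_inv, ← zpow_neg, neg_neg]
    calc ‖(γ : ℚ_[2]) - (n : ℚ_[2])‖ * (2:ℝ)^(vf:ℤ) ≤ (2:ℝ)^(-(N:ℤ)) * (2:ℝ)^(vf:ℤ) :=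
          mul_le_mul_of_nonneg_right hclose (zpow_nonneg (by norm_num) _)
      _ = (2:ℝ) ^ ((vf:ℤ) - N) := by rw [← zpow_add₀ (by norm_num : (2:ℝ) ≠ 0)]; ring_nf
  have hlt : ‖pChoose 2 (γ : ℚ_[2]) m - (n.choose m : ℚ_[2])‖ < ‖(n.choose m : ℚ_[2])‖ := by
    rw [hnormc]
    refine lt_of_le_of_lt hdiff ?_
    apply zpow_lt_zpow_right₀ (by norm_num : (1:ℝ) < 2)
    omega
  have heq : pChoose 2 (γ : ℚ_[2]) m =
      (n.choose m : ℚ_[2]) + (pChoose 2 (γ : ℚ_[2]) m - (n.choose m : ℚ_[2])) := by ring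
  rw [heq, Padic.add_eq_max_of_ne (ne_of_gt hlt), max_eq_left hlt.le, hnormc]

lemma pChoose_norm_le (γ : ℤ_[2]) (n m N : ℕ) (hmn : m ≤ n)
    (hclose : ‖(γ : ℚ_[2]) - (n : ℚ_[2])‖ ≤ (2:ℝ) ^ (-(N:ℤ))) :
    ‖pChoose 2 (γ : ℚ_[2]) m‖ ≤
      max ((2:ℝ) ^ (-(padicValNat 2 (n.choose m) : ℤ)))
        ((2:ℝ) ^ ((padicValNat 2 m.factorial : ℤ) - N)) := by
  set v := padicValNat 2 (n.choose m) with hv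
  set vf := padicValNat 2 m.factorial with hvf
  have hchoose : (n.choose m) ≠ 0 := Nat.choose_pos hmn |>.ne'
  have hnormc : ‖(n.choose m : ℚ_[2])‖ = (2:ℝ) ^ (-(v:ℤ)) := norm_natCast_q _ hchoose
  have hnormf : ‖(m.factorial : ℚ_[2])‖ = (2:ℝ) ^ (-(vf:ℤ)) := norm_natCast_q _ m.factorial_ne_zero
  have hdiff : ‖pChoose 2 (γ : ℚ_[2]) m - (n.choose m : ℚ_[2])‖ ≤ (2:ℝ) ^ ((vf:ℤ) - N) := by
    refine (pChoose_sub_norm γ n m).trans ?_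
    rw [hnormf, div_eq_mul_inv, ← zpow_neg, neg_neg]
    calc ‖(γ : ℚ_[2]) - (n : ℚ_[2])‖ * (2:ℝ)^(vf:ℤ) ≤ (2:ℝ)^(-(N:ℤ)) * (2:ℝ)^(vf:ℤ) :=
          mul_le_mul_of_nonneg_right hclose (zpow_nonneg (by norm_num) _)
      _ = (2:ℝ) ^ ((vf:ℤ) - N) := by rw [← zpow_add₀ (by norm_num : (2:ℝ) ≠ 0)]; ring_nf
  have heq : pChoose 2 (γ : ℚ_[2]) m =
      (n.choose m : ℚ_[2]) + (pChoose 2 (γ : ℚ_[2]) m - (n.choose m : ℚ_[2])) := by ring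
  have hna := Padic.nonarchimedean (p := 2) (n.choose m : ℚ_[2])
    (pChoose 2 (γ : ℚ_[2]) m - (n.choose m : ℚ_[2]))
  rw [← heq] at hna
  exact hna.trans (max_le_max (le_of_eq hnormc) hdiff)

lemma trunc_close (b : ℕ → ℕ) (hb : StrictMono b) (γ : ℤ_[2])
    (hγ : γ = ∑' i : ℕ, (2 : ℤ_[2]) ^ (b i)) (L : ℕ) :
    ‖(γ : ℚ_[2]) - ((∑ i ∈ Finset.range L, 2 ^ (b i) : ℕ) : ℚ_[2])‖ ≤
      (2:ℝ) ^ (-(b L : ℤ) + 1) := by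
  have hnorm2 : ∀ k : ℕ, ‖(2 : ℤ_[2]) ^ k‖ = (2:ℝ)⁻¹ ^ k := by
    intro k
    rw [← PadicInt.padic_norm_e_of_padicInt]
    push_cast
    rw [norm_pow]
    congr 1
    have h2 : ‖((2:ℕ) : ℚ_[2])‖ = ((2:ℕ) : ℝ)⁻¹ := Padic.norm_p
    exact h2.trans (by norm_num)
  have hble : ∀ i, b L + i ≤ b (i + L) := by
    intro i
    induction i with
    | zero => simp
    | succ k ih =>
        have h1 : k + 1 + L = (k + L) + 1 := by omega
        rw [h1]
        have := hb (show k + L < k + L + 1 by omega)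
        omega
  have hsumm : Summable (fun i : ℕ => (2 : ℤ_[2]) ^ (b i)) := by
    apply Summable.of_norm_bounded (g := fun i : ℕ => (2:ℝ)⁻¹ ^ i)
    · exact summable_geometric_of_lt_one (by norm_num) (by norm_num)
    · intro i
      rw [hnorm2]
      exact pow_le_pow_of_le_one (by norm_num) (by norm_num) (hb.le_apply)
  have hsplit := Summable.sum_add_tsum_nat_add L hsumm
  have htail : γ - (∑ i ∈ Finset.range L, (2 : ℤ_[2]) ^ (b i)) =
      ∑' i : ℕ, (2 : ℤ_[2]) ^ (b (i + L)) := by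
    rw [hγ, ← hsplit]; ring
  have hcast : ((∑ i ∈ Finset.range L, 2 ^ (b i) : ℕ) : ℤ_[2]) =
      ∑ i ∈ Finset.range L, (2 : ℤ_[2]) ^ (b i) := by push_cast; rfl
  have hnorm : ‖(γ : ℚ_[2]) - ((∑ i ∈ Finset.range L, 2 ^ (b i) : ℕ) : ℚ_[2])‖
      = ‖γ - (∑ i ∈ Finset.range L, (2 : ℤ_[2]) ^ (b i))‖ := by
    have hc0 : ((∑ i ∈ Finset.range L, 2 ^ (b i) : ℕ) : ℚ_[2])
        = (((∑ i ∈ Finset.range L, 2 ^ (b i) : ℕ) : ℤ_[2]) : ℚ_[2]) := by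
      norm_cast
    rw [hc0, ← PadicInt.coe_sub, PadicInt.padic_norm_e_of_padicInt, hcast]
  rw [hnorm, htail]
  have hsumm' : Summable (fun i : ℕ => ‖(2 : ℤ_[2]) ^ (b (i + L))‖) := by
    apply Summable.of_nonneg_of_le (fun i => norm_nonneg _)
      (fun i => ?_) (Summable.mul_left ((2:ℝ)⁻¹ ^ (b L)) (summable_geometric_of_lt_one (r := (2:ℝ)⁻¹) (by norm_num) (by norm_num)))
    rw [hnorm2]
    calc ((2:ℝ)⁻¹) ^ (b (i + L)) ≤ (2:ℝ)⁻¹ ^ (b L + i) :=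
          pow_le_pow_of_le_one (by norm_num) (by norm_num) (by have := hble i; omega)
      _ = (2:ℝ)⁻¹ ^ (b L) * (2:ℝ)⁻¹ ^ i := by rw [pow_add]
  calc ‖∑' i : ℕ, (2 : ℤ_[2]) ^ (b (i + L))‖ ≤ ∑' i : ℕ, ‖(2 : ℤ_[2]) ^ (b (i + L))‖ :=
        norm_tsum_le_tsum_norm hsumm'
    _ ≤ ∑' i : ℕ, ((2:ℝ)⁻¹ ^ (b L) * (2:ℝ)⁻¹ ^ i) := by
        apply hsumm'.tsum_le_tsum _ (Summable.mul_left _ (summable_geometric_of_lt_one (by norm_num) (by norm_num)))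
        intro i
        rw [hnorm2]
        calc ((2:ℝ)⁻¹) ^ (b (i + L)) ≤ (2:ℝ)⁻¹ ^ (b L + i) :=
              pow_le_pow_of_le_one (by norm_num) (by norm_num) (by have := hble i; omega)
          _ = (2:ℝ)⁻¹ ^ (b L) * (2:ℝ)⁻¹ ^ i := by rw [pow_add]
    _ = (2:ℝ)⁻¹ ^ (b L) * (1 - (2:ℝ)⁻¹)⁻¹ := by
        rw [tsum_mul_left, tsum_geometric_of_lt_one (by norm_num) (by norm_num)]
    _ = (2:ℝ) ^ (-(b L : ℤ) + 1) := by
        have h1 : (1 - (2:ℝ)⁻¹)⁻¹ = 2 := by norm_num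
        rw [h1, zpow_add₀ (by norm_num : (2:ℝ) ≠ 0), zpow_neg, zpow_natCast, zpow_one, inv_pow]

/-! ### Bridging lemmas -/

lemma bseq_strictMono (a : ℕ → ℕ) (ha : StrictMono a) (p : ℕ) :
    StrictMono (fun i => a (2 * i + p)) := by
  intro x y hxy
  exact ha (by omega)

/-- The factor whose digit set contains `a j` has unit norm. -/
lemma norm_factor_same (a : ℕ → ℕ) (ha : StrictMono a) (γ : ℤ_[2]) (p : ℕ)
    (hγ : γ = ∑' i : ℕ, (2 : ℤ_[2]) ^ (a (2 * i + p))) (j s : ℕ) (hs : 2 * s + p = j) :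
    ‖pChoose 2 (γ : ℚ_[2]) (2 ^ (a j))‖ = 1 := by
  set b := fun i => a (2 * i + p) with hbdef
  have hb : StrictMono b := bseq_strictMono a ha p
  set m := 2 ^ (a j) with hm
  set N := padicValNat 2 (Nat.factorial m) + 1 with hN
  set L := max (N + 2) (s + 1) with hL
  set n := ∑ i ∈ Finset.range L, 2 ^ (b i) with hn
  have hsL : s < L := lt_of_lt_of_le (Nat.lt_succ_self s) (le_max_right _ _)
  have hbs : b s = a j := by rw [hbdef]; simp only []; rw [hs]
  have hv : padicValNat 2 (n.choose m) = 0 := val_choose_pow_eq_zero b hb.injective hsL hbs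
  have hmn : m ≤ n := by
    have := le_sum_pow b hsL
    rw [hbs] at this
    exact this
  have hbL : N + 1 ≤ b L := by
    have h1 : 2 * L + p ≤ a (2 * L + p) := ha.le_apply
    have h2 : N + 2 ≤ L := le_max_left _ _
    simp only [hbdef]
    omega
  have hclose : ‖(γ : ℚ_[2]) - (n : ℚ_[2])‖ ≤ (2:ℝ) ^ (-(N:ℤ)) := by
    refine (trunc_close b hb γ hγ L).trans ?_
    apply zpow_le_zpow_right₀ (by norm_num : (1:ℝ) ≤ 2)
    omega
  have := pChoose_norm_eq γ n m N hmn (by omega) hclose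
  rw [this, hv]
  norm_num

/-- The factor whose digit set avoids `[a j, a (j+1))` has norm `2^{-(a (j+1) - a j)}`. -/
lemma norm_factor_other (a : ℕ → ℕ) (ha : StrictMono a) (γ : ℤ_[2]) (p : ℕ)
    (hγ : γ = ∑' i : ℕ, (2 : ℤ_[2]) ^ (a (2 * i + p))) (j s : ℕ) (hs : 2 * s + p = j + 1) :
    ‖pChoose 2 (γ : ℚ_[2]) (2 ^ (a j))‖ = (2:ℝ) ^ (-((a (j+1) - a j : ℕ) : ℤ)) := by
  set b := fun i => a (2 * i + p) with hbdef
  have hb : StrictMono b := bseq_strictMono a ha p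
  set m := 2 ^ (a j) with hm
  set N := padicValNat 2 (Nat.factorial m) + (a (j+1) - a j) + 1 with hN
  set L := max (N + 2) (s + 1) with hL
  set n := ∑ i ∈ Finset.range L, 2 ^ (b i) with hn
  have hsL : s < L := lt_of_lt_of_le (Nat.lt_succ_self s) (le_max_right _ _)
  have hbs : b s = a (j + 1) := by rw [hbdef]; simp only []; rw [hs]
  have hAA' : a j < a (j + 1) := ha (Nat.lt_succ_self j)
  have hsplitb : ∀ i < L, b i < a j ∨ a (j + 1) ≤ b i := by
    intro i _
    rcases lt_or_ge (2 * i + p) j with h | h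
    · exact Or.inl (ha h)
    · have h2 : 2 * i + p ≠ j := by omega
      have h3 : j + 1 ≤ 2 * i + p := by omega
      exact Or.inr (ha.monotone h3)
  have hv : padicValNat 2 (n.choose m) = a (j + 1) - a j :=
    val_choose_pow_eq_gap b hb.injective hAA' hsplitb hsL hbs
  have hmn : m ≤ n := by
    have h1 : (2:ℕ) ^ (a j) ≤ 2 ^ (a (j+1)) := Nat.pow_le_pow_right (by norm_num) hAA'.le
    have h2 := le_sum_pow b hsL
    rw [hbs] at h2
    exact le_trans h1 h2
  have hbL : N + 1 ≤ b L := by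
    have h1 : 2 * L + p ≤ a (2 * L + p) := ha.le_apply
    have h2 : N + 2 ≤ L := le_max_left _ _
    simp only [hbdef]
    omega
  have hclose : ‖(γ : ℚ_[2]) - (n : ℚ_[2])‖ ≤ (2:ℝ) ^ (-(N:ℤ)) := by
    refine (trunc_close b hb γ hγ L).trans ?_
    apply zpow_le_zpow_right₀ (by norm_num : (1:ℝ) ≤ 2)
    omega
  have := pChoose_norm_eq γ n m N hmn (by omega) hclose
  rw [this, hv]

/-- Core combinatorial lower bound for part 1. -/
lemma part1_core (a : ℕ → ℕ) (ha : StrictMono a) {t j m L B : ℕ} {p q : ℕ}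
    (hpq : p + q = 1) (s : ℕ) (hs : 2 * s + p = j)
    (s' : ℕ) (hs'L : s' < L) (hs' : 2 * s' + q = j + 1)
    (hj : t < a j) (hj' : ∀ i < j, a i ≤ t) (hj2 : 2 ≤ j)
    (ht2 : m < 2 ^ (t + 1)) (ht1 : 2 ^ t ≤ m)
    (hsL : s < L)
    (hgapj : a j + B ≤ a (j + 1)) (hgapj' : a (j - 1) + B ≤ a j) :
    B ≤ padicValNat 2 ((∑ i ∈ Finset.range L, 2 ^ (a (2 * i + p))).choose m)
      + padicValNat 2 ((∑ i ∈ Finset.range L, 2 ^ (a (2 * i + q))).choose m) := by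
  classical
  set c := fun i => a (2 * i + p) with hcdef
  set d := fun i => a (2 * i + q) with hddef
  show B ≤ padicValNat 2 ((∑ i ∈ Finset.range L, 2 ^ (c i)).choose m)
      + padicValNat 2 ((∑ i ∈ Finset.range L, 2 ^ (d i)).choose m)
  have hc : StrictMono c := bseq_strictMono a ha p
  have hd : StrictMono d := bseq_strictMono a ha q
  have hcs : c s = a j := by rw [hcdef]; simp only []; rw [hs]
  have hds' : d s' = a (j + 1) := by rw [hddef]; simp only []; rw [hs']
  -- m ≤ both truncations
  have hmnc : m ≤ ∑ i ∈ Finset.range L, 2 ^ (c i) := by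
    have h1 : m ≤ 2 ^ (a j) := le_trans ht2.le (Nat.pow_le_pow_right (by norm_num) hj)
    have h2 := le_sum_pow c hsL
    rw [hcs] at h2
    exact le_trans h1 h2
  have hmnd : m ≤ ∑ i ∈ Finset.range L, 2 ^ (d i) := by
    have h0 : a j ≤ a (j + 1) := (ha (Nat.lt_succ_self j)).le
    have h1 : m ≤ 2 ^ (a (j + 1)) :=
      le_trans ht2.le (Nat.pow_le_pow_right (by norm_num) (by omega))
    have h2 := le_sum_pow d hs'L
    rw [hds'] at h2
    exact le_trans h1 h2
  by_cases hr : (∑ i ∈ (Finset.range L).filter (fun i => d i ≤ t), 2 ^ (d i)) < m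
  · -- run of borrows in the `d` factor, from `t+1` to `a (j+1)`
    have hsplitd : ∀ i < L, d i ≤ t ∨ a (j + 1) ≤ d i := by
      intro i _
      rcases le_or_gt (d i) t with h | h
      · exact Or.inl h
      · right
        have h1 : ¬ (2 * i + q < j) := by
          intro hlt
          exact absurd (hj' _ hlt) (by simp only [hddef] at h; omega)
        have h2 : 2 * i + q ≠ j := by omega
        exact ha.monotone (by omega)
    have hlow := val_choose_lower d hd.injective (lt_trans hj (ha (show j < j + 1 by omega)))
      hsplitd ht2 hr hmnd
    omega
  · push_neg at hr
    -- `d` has the digit `t = a (j-1)`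
    have hex : ∃ k, k < L ∧ d k = t := by
      by_contra hno
      push_neg at hno
      have hlt : (∑ i ∈ (Finset.range L).filter (fun i => d i ≤ t), 2 ^ (d i)) < 2 ^ t := by
        apply sum_pow_lt _ _ (hd.injective.injOn.mono (by intro x hx; exact trivial))
        intro i hi
        simp only [Finset.mem_filter, Finset.mem_range] at hi
        have := hno i hi.1
        omega
      omega
    obtain ⟨k, hkL, hkt⟩ := hex
    have hklt : 2 * k + q < j := by
      by_contra hge
      push_neg at hge
      have := ha.monotone hge
      simp only [hddef] at hkt
      omega
    have hkeq : 2 * k + q = j - 1 := by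
      have h1 : a (j - 1) ≤ t := hj' _ (by omega)
      have h2 : a (j - 1) ≤ a (2 * k + q) := by
        simp only [hddef] at hkt
        omega
      have h3 : j - 1 ≤ 2 * k + q := ha.le_iff_le.1 h2
      omega
    -- the `c` factor has all low digits `< t`, giving a run from `t+1` to `a j`
    have hsplitc : ∀ i < L, c i ≤ t ∨ a j ≤ c i := by
      intro i _
      rcases le_or_gt (c i) t with h | h
      · exact Or.inl h
      · right
        have h1 : ¬ (2 * i + p < j) := by
          intro hlt
          exact absurd (hj' _ hlt) (by simp only [hcdef] at h; omega)
        exact ha.monotone (by omega)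
    have hrc : (∑ i ∈ (Finset.range L).filter (fun i => c i ≤ t), 2 ^ (c i)) < m := by
      have hlt : (∑ i ∈ (Finset.range L).filter (fun i => c i ≤ t), 2 ^ (c i)) < 2 ^ t := by
        apply sum_pow_lt _ _ (hc.injective.injOn.mono (by intro x hx; exact trivial))
        intro i hi
        simp only [Finset.mem_filter, Finset.mem_range] at hi
        rcases Nat.lt_or_ge (c i) t with h | h
        · exact h
        · exfalso
          have hceq : c i = t := by omega
          have : a (2 * i + p) = a (2 * k + q) := by
            simp only [hcdef] at hceq
            simp only [hddef] at hkt
            omega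
          have := ha.injective this
          omega
      omega
    have hlow := val_choose_lower c hc.injective hj hsplitc ht2 hrc hmnc
    have h4 : t = a (j - 1) := by
      simp only [hddef] at hkt
      rw [← hkt, hkeq]
    have : B ≤ a j - t := by omega
    omega

lemma real_bound (B v₁ v₂ : ℕ) (hv : B ≤ v₁ + v₂) (x₁ x₂ : ℝ)
    (h₁ : 0 ≤ x₁) (h₂ : 0 ≤ x₂)
    (hx₁ : x₁ ≤ max ((2:ℝ) ^ (-(v₁:ℤ))) ((2:ℝ) ^ (-(B:ℤ))))
    (hx₂ : x₂ ≤ max ((2:ℝ) ^ (-(v₂:ℤ))) ((2:ℝ) ^ (-(B:ℤ)))) :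
    x₁ * x₂ ≤ (2:ℝ) ^ (-(B:ℤ)) := by
  have hle1 : ∀ k : ℕ, (2:ℝ) ^ (-(k:ℤ)) ≤ 1 := by
    intro k
    have : (2:ℝ) ^ (-(k:ℤ)) ≤ (2:ℝ) ^ (0:ℤ) :=
      zpow_le_zpow_right₀ (by norm_num) (by omega)
    simpa using this
  have hpos : ∀ z : ℤ, (0:ℝ) < (2:ℝ) ^ z := fun z => zpow_pos (by norm_num) z
  have hmul : x₁ * x₂ ≤ max ((2:ℝ) ^ (-(v₁:ℤ))) ((2:ℝ) ^ (-(B:ℤ))) *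
      max ((2:ℝ) ^ (-(v₂:ℤ))) ((2:ℝ) ^ (-(B:ℤ))) :=
    mul_le_mul hx₁ hx₂ h₂ (le_trans h₁ hx₁ |>.trans (le_refl _) |> fun _ => le_trans h₁ hx₁)
  refine hmul.trans ?_
  rcases max_choice ((2:ℝ) ^ (-(v₁:ℤ))) ((2:ℝ) ^ (-(B:ℤ))) with hA | hA <;>
    rcases max_choice ((2:ℝ) ^ (-(v₂:ℤ))) ((2:ℝ) ^ (-(B:ℤ))) with hB2 | hB2 <;>
    rw [hA, hB2]
  · rw [← zpow_add₀ (by norm_num : (2:ℝ) ≠ 0)]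
    apply zpow_le_zpow_right₀ (by norm_num)
    omega
  · calc (2:ℝ) ^ (-(v₁:ℤ)) * (2:ℝ) ^ (-(B:ℤ)) ≤ 1 * (2:ℝ) ^ (-(B:ℤ)) :=
        mul_le_mul_of_nonneg_right (hle1 _) (hpos _).le
      _ = _ := one_mul _
  · calc (2:ℝ) ^ (-(B:ℤ)) * (2:ℝ) ^ (-(v₂:ℤ)) ≤ (2:ℝ) ^ (-(B:ℤ)) * 1 :=
        mul_le_mul_of_nonneg_left (hle1 _) (hpos _).le
      _ = _ := mul_one _
  · calc (2:ℝ) ^ (-(B:ℤ)) * (2:ℝ) ^ (-(B:ℤ)) ≤ (2:ℝ) ^ (-(B:ℤ)) * 1 :=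
        mul_le_mul_of_nonneg_left (hle1 _) (hpos _).le
      _ = _ := mul_one _

/-- For `(a_n)` strictly increasing with gaps tending to infinity, and the 2-adic integers
`γ₁ = Σ 2^{a_{2i}}`, `γ₂ = Σ 2^{a_{2i+1}}`, the products `C(γ₁,m)C(γ₂,m)` tend to `0`
2-adically, and `v₂(C(γ₁,2^{a_j})·C(γ₂,2^{a_j})) = a_{j+1} - a_j` for every `j`. -/
theorem stmt_6 (a : ℕ → ℕ) (ha : StrictMono a)
    (hgap : Filter.Tendsto (fun n => a (n + 1) - a n) Filter.atTop Filter.atTop)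
    (γ₁ γ₂ : ℤ_[2])
    (hγ₁ : γ₁ = ∑' i : ℕ, (2 : ℤ_[2]) ^ (a (2 * i)))
    (hγ₂ : γ₂ = ∑' i : ℕ, (2 : ℤ_[2]) ^ (a (2 * i + 1))) :
    Filter.Tendsto (fun m => pChoose 2 (γ₁ : ℚ_[2]) m * pChoose 2 (γ₂ : ℚ_[2]) m)
      Filter.atTop (nhds 0) ∧
    ∀ j : ℕ, pChoose 2 (γ₁ : ℚ_[2]) (2 ^ a j) * pChoose 2 (γ₂ : ℚ_[2]) (2 ^ a j) ≠ 0 ∧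
      (pChoose 2 (γ₁ : ℚ_[2]) (2 ^ a j) * pChoose 2 (γ₂ : ℚ_[2]) (2 ^ a j)).valuation
        = (a (j + 1) : ℤ) - (a j : ℤ) := by
  have hγ₁' : γ₁ = ∑' i : ℕ, (2 : ℤ_[2]) ^ (a (2 * i + 0)) := hγ₁
  constructor
  · -- Part 1
    rw [NormedAddCommGroup.tendsto_nhds_zero]
    intro ε hε
    obtain ⟨B, hB⟩ := exists_pow_lt_of_lt_one hε (by norm_num : (2:ℝ)⁻¹ < 1)
    obtain ⟨K, hK⟩ := Filter.eventually_atTop.1 (Filter.tendsto_atTop.1 hgap B)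
    rw [Filter.eventually_atTop]
    refine ⟨2 ^ (a (K + 1) + 1), fun m hm => ?_⟩
    have hm0 : m ≠ 0 := by
      have : (0:ℕ) < 2 ^ (a (K + 1) + 1) := Nat.pow_pos (by norm_num)
      omega
    set t := Nat.log 2 m with htdef
    have ht1 : 2 ^ t ≤ m := Nat.pow_log_le_self 2 hm0
    have ht2 : m < 2 ^ (t + 1) := Nat.lt_pow_succ_log_self (by norm_num) m
    have htK : a (K + 1) + 1 ≤ t := (Nat.le_log_iff_pow_le (by norm_num) hm0).2 hm
    have hexj : ∃ j, t < a j := ⟨t + 1, lt_of_lt_of_le (Nat.lt_succ_self t) ha.le_apply⟩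
    set j := Nat.find hexj with hjdef
    have hj : t < a j := Nat.find_spec hexj
    have hj' : ∀ i, i < j → a i ≤ t := fun i hi => not_lt.1 (Nat.find_min hexj hi)
    have hjK : K + 2 ≤ j := by
      by_contra hle
      push_neg at hle
      have h1 : j ≤ K + 1 := by omega
      have h2 : a j ≤ a (K + 1) := ha.monotone h1
      omega
    -- gaps
    have hgapj : a j + B ≤ a (j + 1) := by
      have h1 := hK j (by omega)
      have h2 : a j ≤ a (j + 1) := (ha (Nat.lt_succ_self j)).le
      omega
    have hgapj' : a (j - 1) + B ≤ a j := by
      have h1 := hK (j - 1) (by omega)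
      have h2 : j - 1 + 1 = j := by omega
      rw [h2] at h1
      have h3 : a (j - 1) ≤ a j := ha.monotone (by omega)
      omega
    -- truncation parameters
    set vf := padicValNat 2 m.factorial with hvfdef
    set N := vf + B with hNdef
    set L := N + j + 2 with hLdef
    set n₁ := ∑ i ∈ Finset.range L, 2 ^ (a (2 * i + 0)) with hn₁
    set n₂ := ∑ i ∈ Finset.range L, 2 ^ (a (2 * i + 1)) with hn₂
    have hb₁ : StrictMono (fun i => a (2 * i + 0)) := bseq_strictMono a ha 0
    have hb₂ : StrictMono (fun i => a (2 * i + 1)) := bseq_strictMono a ha 1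
    have hclose₁ : ‖(γ₁ : ℚ_[2]) - (n₁ : ℚ_[2])‖ ≤ (2:ℝ) ^ (-(N:ℤ)) := by
      refine (trunc_close _ hb₁ γ₁ hγ₁' L).trans ?_
      apply zpow_le_zpow_right₀ (by norm_num : (1:ℝ) ≤ 2)
      have : 2 * L + 0 ≤ a (2 * L + 0) := ha.le_apply
      omega
    have hclose₂ : ‖(γ₂ : ℚ_[2]) - (n₂ : ℚ_[2])‖ ≤ (2:ℝ) ^ (-(N:ℤ)) := by
      refine (trunc_close _ hb₂ γ₂ hγ₂ L).trans ?_
      apply zpow_le_zpow_right₀ (by norm_num : (1:ℝ) ≤ 2)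
      have : 2 * L + 1 ≤ a (2 * L + 1) := ha.le_apply
      omega
    -- m ≤ n₁, n₂
    have hmle : ∀ p k : ℕ, k < L → j ≤ 2 * k + p → m ≤ ∑ i ∈ Finset.range L, 2 ^ (a (2 * i + p)) := by
      intro p k hkL hjk
      have h1 : m ≤ 2 ^ (a (2 * k + p)) :=
        le_trans ht2.le (Nat.pow_le_pow_right (by norm_num) (by
          have := ha.monotone hjk
          omega))
      exact le_trans h1 (le_sum_pow (fun i => a (2 * i + p)) hkL)
    have hmn₁ : m ≤ n₁ := hmle 0 ((j + 1) / 2) (by omega) (by omega)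
    have hmn₂ : m ≤ n₂ := hmle 1 ((j + 1) / 2) (by omega) (by omega)
    -- combinatorial bound
    have hkey : B ≤ padicValNat 2 (n₁.choose m) + padicValNat 2 (n₂.choose m) := by
      rcases Nat.even_or_odd j with ⟨s, hs⟩ | ⟨s, hs⟩
      · exact part1_core a ha (p := 0) (q := 1) (by norm_num) s (by omega)
          s (by omega) (by omega) hj hj' (by omega) ht2 ht1 (by omega) hgapj hgapj'
      · have := part1_core a ha (t := t) (j := j) (m := m) (L := L) (B := B) (p := 1) (q := 0) (by norm_num) s (by omega)
          (s + 1) (by omega) (by omega) hj hj' (by omega) ht2 ht1 (by omega) hgapj hgapj'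
        rw [hn₁, hn₂]
        omega
    -- norm bounds
    have hub₁ := pChoose_norm_le γ₁ n₁ m N hmn₁ hclose₁
    have hub₂ := pChoose_norm_le γ₂ n₂ m N hmn₂ hclose₂
    have hNeq : (vf : ℤ) - (N : ℤ) = -(B : ℤ) := by push_cast; omega
    rw [hNeq] at hub₁ hub₂
    have hfinal : ‖pChoose 2 (γ₁ : ℚ_[2]) m * pChoose 2 (γ₂ : ℚ_[2]) m‖ ≤ (2:ℝ) ^ (-(B:ℤ)) := by
      rw [norm_mul]
      exact real_bound B _ _ hkey _ _ (norm_nonneg _) (norm_nonneg _) hub₁ hub₂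
    calc ‖pChoose 2 (γ₁ : ℚ_[2]) m * pChoose 2 (γ₂ : ℚ_[2]) m‖ ≤ (2:ℝ) ^ (-(B:ℤ)) := hfinal
      _ = (2:ℝ)⁻¹ ^ B := by rw [zpow_neg, zpow_natCast, inv_pow]
      _ < ε := hB
  · -- Part 2
    intro j
    have hle : a j ≤ a (j + 1) := (ha (Nat.lt_succ_self j)).le
    have hnorm : ‖pChoose 2 (γ₁ : ℚ_[2]) (2 ^ a j) * pChoose 2 (γ₂ : ℚ_[2]) (2 ^ a j)‖
        = (2:ℝ) ^ (-((a (j + 1) - a j : ℕ) : ℤ)) := by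
      rcases Nat.even_or_odd j with ⟨s, hs⟩ | ⟨s, hs⟩
      · have h1 := norm_factor_same a ha γ₁ 0 hγ₁' j s (by omega)
        have h2 := norm_factor_other a ha γ₂ 1 hγ₂ j s (by omega)
        rw [norm_mul, h1, h2, one_mul]
      · have h1 := norm_factor_same a ha γ₂ 1 hγ₂ j s (by omega)
        have h2 := norm_factor_other a ha γ₁ 0 hγ₁' j (s + 1) (by omega)
        rw [norm_mul, h1, h2, mul_one]
    obtain ⟨hne, hval⟩ := val_eq_of_norm _ _ hnorm
    refine ⟨hne, ?_⟩
    rw [hval]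
    omega
end

section
/- Let γ ∈ ℤ₂ be a 2-adic integer that is not (the image of) a rational integer, i.e. γ ∉ ℤ. Then the sequence m ↦ C(2m,m)·C(γ,m) (where C(2m,m) is the ordinary central binomial coefficient viewed in ℤ₂) does NOT tend to 0 in ℤ₂ as m → ∞. In particular, if m = 2^n is a power of 2 appearing in the base-2 expansion of γ, then v₂(C(γ,2^n)) = 0 while v₂(C(2^{n+1},2^n)) = 1. -/
open Finset

lemma two_dvd_iff {x : ℤ_[2]} : (2 : ℤ_[2]) ∣ x ↔ ‖x‖ < 1 := by
  rw [PadicInt.norm_lt_one_iff_dvd]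
  norm_num

lemma norm_sub_one_eq_one {x : ℤ_[2]} (h : (2 : ℤ_[2]) ∣ x) : ‖x - 1‖ = 1 := by
  refine le_antisymm (PadicInt.norm_le_one _) ?_
  by_contra hlt
  push_neg at hlt
  have h2 : (2 : ℤ_[2]) ∣ (x - 1) := two_dvd_iff.mpr hlt
  have h1 : (2 : ℤ_[2]) ∣ 1 := by
    have := h.sub h2
    simpa using this
  have := two_dvd_iff.mp h1
  simp at this

lemma norm_add_one_eq_one {x : ℤ_[2]} (h : (2 : ℤ_[2]) ∣ x) : ‖x + 1‖ = 1 := by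
  refine le_antisymm (PadicInt.norm_le_one _) ?_
  by_contra hlt
  push_neg at hlt
  have h2 : (2 : ℤ_[2]) ∣ (x + 1) := two_dvd_iff.mpr hlt
  have h1 : (2 : ℤ_[2]) ∣ 1 := by
    have := h2.sub h
    simpa using this
  have := two_dvd_iff.mp h1
  simp at this

lemma norm_two : ‖(2 : ℤ_[2])‖ = (2:ℝ)⁻¹ := by
  have := PadicInt.norm_p (p := 2)
  norm_num at this ⊢
  exact_mod_cast this

lemma pair_norm (γ δ : ℤ_[2]) (b j : ℕ) (hb : b = 0 ∨ b = 1) (hγ : γ = (b : ℤ_[2]) + 2 * δ) :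
    ‖γ - ((2 * j : ℕ) : ℤ_[2])‖ * ‖γ - ((2 * j + 1 : ℕ) : ℤ_[2])‖ = 2⁻¹ * ‖δ - (j : ℤ_[2])‖ := by
  rcases hb with rfl | rfl
  · have e1 : γ - ((2 * j : ℕ) : ℤ_[2]) = 2 * (δ - j) := by
      rw [hγ]; push_cast; ring
    have e2 : γ - ((2 * j + 1 : ℕ) : ℤ_[2]) = 2 * (δ - j) - 1 := by
      rw [hγ]; push_cast; ring
    rw [e1, e2, norm_mul, norm_sub_one_eq_one ⟨δ - j, rfl⟩, norm_two, mul_one]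
  · have e1 : γ - ((2 * j : ℕ) : ℤ_[2]) = 2 * (δ - j) + 1 := by
      rw [hγ]; push_cast; ring
    have e2 : γ - ((2 * j + 1 : ℕ) : ℤ_[2]) = 2 * (δ - j) := by
      rw [hγ]; push_cast; ring
    rw [e1, e2, norm_mul, norm_add_one_eq_one ⟨δ - j, rfl⟩, norm_two, one_mul]

lemma prod_range_two_mul {M : Type*} [CommMonoid M] (m : ℕ) (f : ℕ → M) :
    ∏ k ∈ Finset.range (2 * m), f k = ∏ j ∈ Finset.range m, (f (2 * j) * f (2 * j + 1)) := by
  induction m with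
  | zero => simp
  | succ m ih =>
    have h2 : 2 * (m + 1) = (2 * m + 1) + 1 := by ring
    rw [h2, Finset.prod_range_succ, Finset.prod_range_succ, ih, Finset.prod_range_succ,
      mul_assoc]

lemma padicint_norm_prod {ι : Type*} (s : Finset ι) (f : ι → ℤ_[2]) :
    ‖∏ i ∈ s, f i‖ = ∏ i ∈ s, ‖f i‖ := by
  classical
  induction s using Finset.cons_induction with
  | empty => simp
  | cons a s ha ih => rw [Finset.prod_cons, Finset.prod_cons, norm_mul, ih]

lemma key : ∀ (n : ℕ) (γ : ℤ_[2]) (a : ℕ), a < 2 ^ n →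
    ‖γ - ((a + 2 ^ n : ℕ) : ℤ_[2])‖ ≤ (2 : ℝ) ^ (-(n + 1 : ℤ)) →
    ‖∏ k ∈ Finset.range (2 ^ n), (γ - (k : ℤ_[2]))‖ = (2 : ℝ) ^ (1 - (2 ^ n : ℤ)) := by
  intro n
  induction n with
  | zero =>
    intro γ a ha h
    interval_cases a
    simp only [pow_zero, Finset.prod_range_one, Nat.cast_zero, sub_zero]
    have hdvd : (2 : ℤ_[2]) ∣ (γ - 1) := by
      apply two_dvd_iff.mpr
      refine lt_of_le_of_lt ?_ (show (2:ℝ)^(-(0+1:ℤ)) < 1 by norm_num)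
      simpa using h
    have := norm_add_one_eq_one hdvd
    simpa using this
  | succ n ih =>
    intro γ a ha h
    -- extract ε with γ - (a + 2^(n+1)) = 2^(n+2) * ε
    have h' : ‖γ - ((a + 2 ^ (n+1) : ℕ) : ℤ_[2])‖ ≤ ((2:ℕ) : ℝ) ^ (-((n+2 : ℕ) : ℤ)) := by
      refine le_trans h (le_of_eq ?_)
      push_cast
      ring_nf
    rw [PadicInt.norm_le_pow_iff_mem_span_pow, Ideal.mem_span_singleton] at h'
    obtain ⟨ε, hε⟩ := h'
    have hab : a = 2 * (a / 2) + a % 2 := by omega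
    set b := a % 2 with hbdef
    set a' := a / 2 with ha'def
    have hb : b = 0 ∨ b = 1 := by omega
    have hpow : 2 ^ (n + 1) = 2 * 2 ^ n := by ring
    have ha' : a' < 2 ^ n := by omega
    set δ : ℤ_[2] := ((a' + 2 ^ n : ℕ) : ℤ_[2]) + 2 ^ (n + 1) * ε with hδdef
    have hcast : ((2:ℕ) : ℤ_[2]) = 2 := by norm_num
    have hγδ : γ = (b : ℤ_[2]) + 2 * δ := by
      have hab2 : (a : ℤ_[2]) = 2 * (a' : ℤ_[2]) + (b : ℤ_[2]) := by exact_mod_cast congrArg (Nat.cast : ℕ → ℤ_[2]) hab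
      have hε2 := hε
      push_cast [hcast] at hε2
      rw [hδdef]
      push_cast [hcast]
      linear_combination hε2 + hab2
    have hδnorm : ‖δ - ((a' + 2 ^ n : ℕ) : ℤ_[2])‖ ≤ (2 : ℝ) ^ (-(n + 1 : ℤ)) := by
      have e : δ - ((a' + 2 ^ n : ℕ) : ℤ_[2]) = 2 ^ (n + 1) * ε := by rw [hδdef]; ring
      have : δ - ((a' + 2 ^ n : ℕ) : ℤ_[2]) ∈ Ideal.span {((2:ℕ) : ℤ_[2]) ^ (n+1)} := by
        rw [Ideal.mem_span_singleton, e, hcast]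
        exact Dvd.intro ε rfl
      have := (PadicInt.norm_le_pow_iff_mem_span_pow _ (n+1)).mpr this
      refine le_trans this (le_of_eq ?_)
      push_cast
      ring_nf
    have IH := ih δ a' ha' hδnorm
    have hstep : ∀ j ∈ Finset.range (2 ^ n),
        ‖(γ - ((2 * j : ℕ) : ℤ_[2])) * (γ - ((2 * j + 1 : ℕ) : ℤ_[2]))‖
          = 2⁻¹ * ‖δ - (j : ℤ_[2])‖ := fun j _ => by
      rw [norm_mul]; exact pair_norm γ δ b j hb hγδ
    rw [hpow, prod_range_two_mul, padicint_norm_prod, Finset.prod_congr rfl hstep,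
      Finset.prod_mul_distrib, Finset.prod_const, Finset.card_range, ← padicint_norm_prod, IH,
      inv_pow, ← zpow_natCast (2:ℝ) (2^n), ← zpow_neg, ← zpow_add₀ (two_ne_zero)]
    congr 1
    push_cast
    ring

lemma fact_val (n : ℕ) : padicValNat 2 (Nat.factorial (2 ^ n)) = 2 ^ n - 1 := by
  induction n with
  | zero => simp
  | succ n ih =>
    have h2 : (2:ℕ) ^ (n+1) = 2 * 2 ^ n := by ring
    rw [h2, padicValNat_factorial_mul, ih]
    have := Nat.one_le_two_pow (n := n)
    omega

lemma fact_norm (n : ℕ) : ‖((2 ^ n).factorial : ℚ_[2])‖ = (2:ℝ) ^ (1 - (2 ^ n : ℤ)) := by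
  rw [Padic.norm_eq_zpow_neg_valuation (by exact_mod_cast (Nat.factorial_ne_zero _)),
    Padic.valuation_natCast, fact_val]
  have h1 : (1:ℕ) ≤ 2 ^ n := Nat.one_le_two_pow
  rw [show ((2:ℕ):ℝ) = (2:ℝ) by norm_num]
  congr 1
  push_cast [Nat.cast_sub h1]
  ring

lemma choose_val (n : ℕ) : padicValNat 2 ((2 ^ (n+1)).choose (2 ^ n)) = 1 := by
  have hle : (2:ℕ) ^ n ≤ 2 ^ (n+1) := Nat.pow_le_pow_right (by norm_num) (Nat.le_succ n)
  have h := Nat.choose_mul_factorial_mul_factorial hle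
  have h2 : (2:ℕ) ^ (n+1) = 2 * 2 ^ n := by ring
  have hsub : 2 ^ (n+1) - 2 ^ n = 2 ^ n := by omega
  rw [hsub] at h
  have hv := congrArg (padicValNat 2) h
  rw [padicValNat.mul (mul_ne_zero (Nat.choose_pos hle).ne' (Nat.factorial_ne_zero _))
      (Nat.factorial_ne_zero _),
    padicValNat.mul (Nat.choose_pos hle).ne' (Nat.factorial_ne_zero _),
    fact_val, fact_val] at hv
  have h1 : (1:ℕ) ≤ 2 ^ n := Nat.one_le_two_pow
  omega

lemma desc_eval_prod (m : ℕ) (x : ℚ_[2]) :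
    (descPochhammer ℚ_[2] m).eval x = ∏ k ∈ Finset.range m, (x - k) := by
  induction m with
  | zero => simp [descPochhammer_zero]
  | succ m ih => rw [descPochhammer_succ_eval, ih, Finset.prod_range_succ]

lemma digit_norm (γ : ℤ_[2]) (n : ℕ) (h : Nat.testBit (PadicInt.appr γ (n+1)) n = true) :
    ‖∏ k ∈ Finset.range (2 ^ n), (γ - (k : ℤ_[2]))‖ = (2:ℝ) ^ (1 - (2 ^ n : ℤ)) := by
  set N := PadicInt.appr γ (n+1) with hN
  have hge : 2 ^ n ≤ N := Nat.ge_two_pow_of_testBit h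
  have hlt : N < 2 ^ (n+1) := PadicInt.appr_lt γ (n+1)
  have h2 : (2:ℕ) ^ (n+1) = 2 * 2 ^ n := by ring
  have ha : N - 2 ^ n < 2 ^ n := by omega
  have heq : (N - 2 ^ n) + 2 ^ n = N := by omega
  apply key n γ (N - 2 ^ n) ha
  rw [heq]
  have hmem := PadicInt.appr_spec (n+1) γ
  have hle := (PadicInt.norm_le_pow_iff_mem_span_pow _ (n+1)).mpr hmem
  refine le_trans hle (le_of_eq ?_)
  push_cast
  ring_nf

lemma pchoose_norm (γ : ℤ_[2]) (n : ℕ) (h : Nat.testBit (PadicInt.appr γ (n+1)) n = true) :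
    ‖(descPochhammer ℚ_[2] (2 ^ n)).eval (γ : ℚ_[2]) / ((2 ^ n).factorial : ℚ_[2])‖ = 1 := by
  rw [norm_div, desc_eval_prod, fact_norm]
  have : (∏ k ∈ Finset.range (2 ^ n), ((γ : ℚ_[2]) - k))
      = ((∏ k ∈ Finset.range (2 ^ n), (γ - (k : ℤ_[2])) : ℤ_[2]) : ℚ_[2]) := by
    induction (Finset.range (2 ^ n)) using Finset.cons_induction with
    | empty => simp
    | cons a s ha ih =>
      rw [Finset.prod_cons, Finset.prod_cons, PadicInt.coe_mul, ih, PadicInt.coe_sub,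
        PadicInt.coe_natCast]
  rw [this, PadicInt.padic_norm_e_of_padicInt, digit_norm γ n h]
  have : (2:ℝ) ^ (1 - (2 ^ n : ℤ)) ≠ 0 := by positivity
  field_simp

lemma exists_digit (γ : ℤ_[2]) (hγ : ¬ ∃ z : ℤ, (z : ℤ_[2]) = γ) (N : ℕ) :
    ∃ n, N ≤ n ∧ Nat.testBit (PadicInt.appr γ (n+1)) n = true := by
  by_contra hc
  push_neg at hc
  have hstab : ∀ n, N ≤ n → PadicInt.appr γ n = PadicInt.appr γ N := by
    intro n hn
    induction n, hn using Nat.le_induction with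
    | base => rfl
    | succ n hn ih =>
      have hbit : Nat.testBit (PadicInt.appr γ (n+1)) n = false := by
        simpa using hc n hn
      have hlt : PadicInt.appr γ (n+1) < 2 ^ (n+1) := PadicInt.appr_lt γ (n+1)
      have h2 : (2:ℕ) ^ (n+1) = 2 * 2 ^ n := by ring
      have hlt2 : PadicInt.appr γ (n+1) < 2 ^ n := by
        by_contra hge
        push_neg at hge
        rw [Nat.testBit_eq_decide_div_mod_eq] at hbit
        have hdiv : PadicInt.appr γ (n+1) / 2 ^ n = 1 :=
          Nat.div_eq_of_lt_le (by omega) (by omega)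
        simp [hdiv] at hbit
      have hdvd : 2 ^ n ∣ PadicInt.appr γ (n+1) - PadicInt.appr γ n :=
        PadicInt.dvd_appr_sub_appr γ n (n+1) (Nat.le_succ n)
      have hmono : PadicInt.appr γ n ≤ PadicInt.appr γ (n+1) :=
        PadicInt.appr_mono γ (Nat.le_succ n)
      have hz : PadicInt.appr γ (n+1) - PadicInt.appr γ n = 0 :=
        Nat.eq_zero_of_dvd_of_lt hdvd (by omega)
      omega
  apply hγ
  refine ⟨(PadicInt.appr γ N : ℤ), ?_⟩
  have hbound : ∀ n : ℕ, N ≤ n → ‖γ - ((PadicInt.appr γ N : ℕ) : ℤ_[2])‖ ≤ (2:ℝ) ^ (-(n:ℤ)) := by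
    intro n hn
    rw [← hstab n hn]
    have hmem := PadicInt.appr_spec n γ
    have := (PadicInt.norm_le_pow_iff_mem_span_pow _ n).mpr hmem
    exact_mod_cast this
  have hx : γ - ((PadicInt.appr γ N : ℕ) : ℤ_[2]) = 0 := by
    by_contra h0
    have hpos : 0 < ‖γ - ((PadicInt.appr γ N : ℕ) : ℤ_[2])‖ := norm_pos_iff.mpr h0
    obtain ⟨k, hk⟩ := PadicInt.exists_pow_neg_lt 2 hpos
    have hn := hbound (max k N) (le_max_right _ _)
    have hmono2 : (2:ℝ) ^ (-((max k N : ℕ):ℤ)) ≤ (2:ℝ) ^ (-(k:ℤ)) := by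
      apply zpow_le_zpow_right₀ (by norm_num)
      simp [le_max_left]
    push_cast at hk
    linarith [hk, hn, hmono2]
  push_cast
  exact (sub_eq_zero.mp hx).symm

lemma choose_norm (n : ℕ) : ‖(((2 ^ (n+1)).choose (2 ^ n) : ℕ) : ℚ_[2])‖ = (2:ℝ)⁻¹ := by
  have hle : (2:ℕ) ^ n ≤ 2 ^ (n+1) := Nat.pow_le_pow_right (by norm_num) (Nat.le_succ n)
  rw [Padic.norm_eq_zpow_neg_valuation (by exact_mod_cast (Nat.choose_pos hle).ne'),
    Padic.valuation_natCast, choose_val n]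
  norm_num

/-- For `γ ∈ ℤ₂ \ ℤ`, the sequence `C(2m,m)·C(γ,m)` does not tend to `0` 2-adically; in
particular for any `n` such that `2^n` occurs in the binary expansion of `γ`,
`v₂(C(γ,2^n)) = 0` while `v₂(C(2^{n+1},2^n)) = 1`. -/
theorem stmt_10 (γ : ℤ_[2]) (hγ : ¬ ∃ z : ℤ, (z : ℤ_[2]) = γ) :
    (¬ Filter.Tendsto
        (fun m : ℕ => ((Nat.choose (2 * m) m : ℚ_[2])) * pChoose 2 (γ : ℚ_[2]) m)
        Filter.atTop (nhds 0)) ∧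
    ∀ n : ℕ, Nat.testBit (PadicInt.appr γ (n + 1)) n = true →
      ‖pChoose 2 (γ : ℚ_[2]) (2 ^ n)‖ = 1 ∧
      padicValNat 2 (Nat.choose (2 ^ (n + 1)) (2 ^ n)) = 1 := by
  have hkey : ∀ n : ℕ, Nat.testBit (PadicInt.appr γ (n + 1)) n = true →
      ‖pChoose 2 (γ : ℚ_[2]) (2 ^ n)‖ = 1 := fun n hbit => pchoose_norm γ n hbit
  constructor
  · intro hT
    rw [Metric.tendsto_atTop] at hT
    obtain ⟨M, hM⟩ := hT (1/2) (by norm_num)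
    obtain ⟨n, hnM, hbit⟩ := exists_digit γ hγ M
    have hm : M ≤ 2 ^ n := le_trans hnM (Nat.le_of_lt (Nat.lt_two_pow_self (n := n)))
    have hd := hM (2 ^ n) hm
    rw [dist_eq_norm, sub_zero, norm_mul, hkey n hbit, mul_one] at hd
    have h2 : 2 * 2 ^ n = 2 ^ (n+1) := by ring
    rw [h2, choose_norm n] at hd
    norm_num at hd
  · exact fun n hbit => ⟨hkey n hbit, choose_val n⟩
end
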